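/- Let $Y_n$ and $Y'_n$ be sequences of real random variables with means $\mu_n, \mu'_n$ and standard deviations $\sigma_n, \sigma'_n > 0$. Suppose there are sequences $\epsilon_1(n),\epsilon_2(n),\epsilon_3(n),\epsilon_4(n) \to 0$ such that (i) $|\mu'_n - \mu_n| \le \epsilon_1(n)\sigma'_n$, (ii) $|\sigma'_n - \sigma_n| \le \epsilon_2(n)\sigma'_n$, (iii) for all $t$, $|\mathbb{P}(Y'_n \ge t) - \mathbb{P}(Y_n \ge t)| \le \epsilon_3(n)$, and (iv) for all $t$, $|\mathbb{P}((Y'_n-\mu'_n)/\sigma'_n \le t) - \Phi(t)| \le \epsilon_4(n)$, where $\Phi$ is the standard normal CDF. Then there is a constant $C > 0$ such that for all $t$ and all $n$, $|\mathbb{P}((Y_n-\mu_n)/\sigma_n \le t) - \Phi(t)| \le C\sum_{i=1}^4 \epsilon_i(n)$. -/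

import Mathlib

open MeasureTheory

/-- Standard normal cumulative distribution function. -/
noncomputable def stdNormalCDF (t : ℝ) : ℝ :=
  ∫ x in Set.Iic t, Real.exp (-x ^ 2 / 2) / Real.sqrt (2 * Real.pi)

namespace CLTAux

noncomputable def gauss (x : ℝ) : ℝ := Real.exp (-x ^ 2 / 2) / Real.sqrt (2 * Real.pi)

lemma cdf_eq (t : ℝ) : stdNormalCDF t = ∫ x in Set.Iic t, gauss x := rfl

lemma sqrtpi_pos : 0 < Real.sqrt (2 * Real.pi) := Real.sqrt_pos.2 (by positivity)

lemma two_le_sqrtpi : (2:ℝ) ≤ Real.sqrt (2 * Real.pi) := by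
  nlinarith [Real.sq_sqrt (by positivity : (0:ℝ) ≤ 2*Real.pi), Real.sqrt_nonneg (2*Real.pi), Real.pi_gt_three]

lemma gauss_nonneg (x : ℝ) : 0 ≤ gauss x := by
  unfold gauss; positivity

lemma gauss_le (x M : ℝ) (h : Real.exp (-x ^ 2 / 2) ≤ M) : gauss x ≤ M / 2 := by
  unfold gauss
  have hM : 0 < M := lt_of_lt_of_le (Real.exp_pos _) h
  rw [div_le_div_iff₀ sqrtpi_pos (by norm_num : (0:ℝ) < 2)]
  nlinarith [two_le_sqrtpi, Real.exp_pos (-x ^ 2 / 2)]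

lemma gauss_integrable : Integrable gauss := by
  have h : Integrable (fun x : ℝ => Real.exp (-(1/2) * x ^ 2)) := integrable_exp_neg_mul_sq (by norm_num)
  have : gauss = fun x => Real.exp (-(1/2) * x ^ 2) / Real.sqrt (2 * Real.pi) := by
    funext x; unfold gauss; ring_nf
  rw [this]
  exact h.div_const _

lemma gauss_integral : ∫ x, gauss x = 1 := by
  have h := integral_gaussian (1/2 : ℝ)
  unfold gauss
  rw [show (fun x : ℝ => Real.exp (-x ^ 2 / 2) / Real.sqrt (2 * Real.pi)) = fun x : ℝ => Real.exp (-(1/2) * x ^ 2) / Real.sqrt (2 * Real.pi) by funext x; ring_nf]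
  rw [integral_div, h]
  rw [show Real.pi / (1/2 : ℝ) = 2 * Real.pi by ring]
  exact div_self (ne_of_gt sqrtpi_pos)

lemma cdf_nonneg (t : ℝ) : 0 ≤ stdNormalCDF t := by
  rw [cdf_eq]
  exact setIntegral_nonneg measurableSet_Iic (fun x _ => gauss_nonneg x)

lemma cdf_le_one (t : ℝ) : stdNormalCDF t ≤ 1 := by
  rw [cdf_eq, ← gauss_integral]
  exact setIntegral_le_integral gauss_integrable (Filter.Eventually.of_forall gauss_nonneg)

lemma cdf_diff (y x : ℝ) (h : y ≤ x) :
    stdNormalCDF x - stdNormalCDF y = ∫ u in Set.Ioc y x, gauss u := by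
  rw [cdf_eq, cdf_eq, ← Set.Iic_union_Ioc_eq_Iic h,
    setIntegral_union (Set.Iic_disjoint_Ioc le_rfl) measurableSet_Ioc
      gauss_integrable.integrableOn gauss_integrable.integrableOn]
  ring

lemma cdf_mono : Monotone stdNormalCDF := by
  intro y x h
  have := cdf_diff y x h
  have h2 : 0 ≤ ∫ u in Set.Ioc y x, gauss u :=
    setIntegral_nonneg measurableSet_Ioc (fun u _ => gauss_nonneg u)
  linarith

lemma cdf_diff_le (y x M : ℝ) (h : y ≤ x) (hM : ∀ u ∈ Set.Ioc y x, gauss u ≤ M) :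
    stdNormalCDF x - stdNormalCDF y ≤ (x - y) * M := by
  rw [cdf_diff y x h]
  calc ∫ u in Set.Ioc y x, gauss u ≤ ∫ _ in Set.Ioc y x, M := by
        apply setIntegral_mono_on gauss_integrable.integrableOn
          (integrableOn_const (by rw [Real.volume_Ioc]; exact ENNReal.ofReal_ne_top) enorm_ne_top)
          measurableSet_Ioc hM
    _ = (x - y) * M := by
        rw [setIntegral_const, measureReal_def, Real.volume_Ioc, smul_eq_mul, ENNReal.toReal_ofReal (by linarith)]

lemma cdf_lip (y x : ℝ) : |stdNormalCDF x - stdNormalCDF y| ≤ |x - y| * (1/2) := by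
  have key : ∀ a b : ℝ, a ≤ b → stdNormalCDF b - stdNormalCDF a ≤ (b - a) * (1/2) := by
    intro a b hab
    apply cdf_diff_le a b _ hab
    intro u _
    exact gauss_le u 1 (Real.exp_le_one_iff.2 (by nlinarith [sq_nonneg u]))
  rcases le_total y x with h | h
  · rw [abs_of_nonneg (sub_nonneg.2 (cdf_mono h)), abs_of_nonneg (by linarith)]
    exact key y x h
  · rw [abs_of_nonpos (sub_nonpos.2 (cdf_mono h)), abs_of_nonpos (by linarith)]
    have := key x y h
    linarith

lemma t_exp_le (t : ℝ) : |t| * Real.exp (-(t^2/4)/2) ≤ 4 := by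
  rcases le_total (|t|) 4 with h | h
  · have h1 : Real.exp (-(t^2/4)/2) ≤ 1 := Real.exp_le_one_iff.2 (by nlinarith [sq_nonneg t])
    nlinarith [abs_nonneg t, Real.exp_pos (-(t^2/4)/2)]
  · have h1 : t^2/8 + 1 ≤ Real.exp (t^2/8) := Real.add_one_le_exp _
    have h2 : Real.exp (-(t^2/4)/2) = (Real.exp (t^2/8))⁻¹ := by
      rw [← Real.exp_neg]; ring_nf
    rw [h2]
    rw [mul_inv_le_iff₀ (Real.exp_pos _)]
    have h3 : t^2 = |t|^2 := (sq_abs t).symm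
    nlinarith [Real.exp_pos (t^2/8)]

lemma cdf_scale {a t : ℝ} (ha : |a - 1| ≤ 1/2) :
    |stdNormalCDF (a * t) - stdNormalCDF t| ≤ 2 * |a - 1| := by
  have ha' := abs_le.1 ha
  set y := min (a*t) t with hy
  set x := max (a*t) t with hx
  have hyx : y ≤ x := min_le_max
  have hsq : ∀ u ∈ Set.Ioc y x, t^2/4 ≤ u^2 := by
    intro u hu
    rcases le_total 0 t with ht | ht
    · have h1 : t/2 ≤ y := le_min (by nlinarith) (by linarith)
      have h2 : t/2 < u := lt_of_le_of_lt h1 hu.1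
      nlinarith
    · have h1 : x ≤ t/2 := max_le (by nlinarith) (by linarith)
      have h2 : u ≤ t/2 := le_trans hu.2 h1
      nlinarith
  have hM : ∀ u ∈ Set.Ioc y x, gauss u ≤ Real.exp (-(t^2/4)/2) / 2 := by
    intro u hu
    exact gauss_le u _ (Real.exp_le_exp.2 (by nlinarith [hsq u hu]))
  have hd := cdf_diff_le y x _ hyx hM
  have hxy : x - y = |a - 1| * |t| := by
    rw [hx, hy, max_sub_min_eq_abs, ← abs_mul, abs_sub_comm]
    ring_nf
  have habs : |stdNormalCDF (a*t) - stdNormalCDF t| = stdNormalCDF x - stdNormalCDF y := by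
    rcases le_total (a*t) t with h | h
    · rw [hx, hy, max_eq_right h, min_eq_left h,
        abs_of_nonpos (sub_nonpos.2 (cdf_mono h))]
      ring
    · rw [hx, hy, max_eq_left h, min_eq_right h,
        abs_of_nonneg (sub_nonneg.2 (cdf_mono h))]
  rw [habs]
  have ht4 := t_exp_le t
  have h5 : 0 ≤ |a-1| := abs_nonneg _
  have h6 : (0:ℝ) < Real.exp (-(t^2/4)/2) := Real.exp_pos _
  calc stdNormalCDF x - stdNormalCDF y ≤ (x - y) * (Real.exp (-(t^2/4)/2) / 2) := hd
    _ = |a-1| * (|t| * Real.exp (-(t^2/4)/2)) / 2 := by rw [hxy]; ring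
    _ ≤ |a-1| * 4 / 2 := by
        have : |a-1| * (|t| * Real.exp (-(t^2/4)/2)) ≤ |a-1| * 4 :=
          mul_le_mul_of_nonneg_left ht4 h5
        linarith
    _ = 2 * |a-1| := by ring



lemma prob_le_one' {α : Type*} [MeasurableSpace α] (Q : Measure α) [IsProbabilityMeasure Q]
    (A : Set α) : (Q A).toReal ≤ 1 := by
  simpa using ENNReal.toReal_mono ENNReal.one_ne_top (prob_le_one (μ := Q) (s := A))

lemma prob_compl' {α : Type*} [MeasurableSpace α] (Q : Measure α) [IsProbabilityMeasure Q]
    {A : Set α} (hA : MeasurableSet A) : (Q Aᶜ).toReal = 1 - (Q A).toReal := by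
  rw [prob_compl_eq_one_sub hA, ENNReal.toReal_sub_of_le prob_le_one ENNReal.one_ne_top,
    ENNReal.toReal_one]

lemma prob_mono' {α : Type*} [MeasurableSpace α] (Q : Measure α) [IsProbabilityMeasure Q]
    {A B : Set α} (h : A ⊆ B) : (Q A).toReal ≤ (Q B).toReal :=
  ENNReal.toReal_mono (measure_ne_top Q B) (measure_mono h)

end CLTAux

open CLTAux

/-- Lemma 4.1: transfer of the CLT along close sequences of random variables. -/
theorem clt_transfer
    {Ω Ω' : ℕ → Type*} [∀ n, MeasurableSpace (Ω n)] [∀ n, MeasurableSpace (Ω' n)]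
    (P : ∀ n, Measure (Ω n)) (P' : ∀ n, Measure (Ω' n))
    [∀ n, IsProbabilityMeasure (P n)] [∀ n, IsProbabilityMeasure (P' n)]
    (Y : ∀ n, Ω n → ℝ) (Y' : ∀ n, Ω' n → ℝ)
    (hY : ∀ n, Measurable (Y n)) (hY' : ∀ n, Measurable (Y' n))
    (μ μ' σ σ' : ℕ → ℝ)
    (hμ : ∀ n, μ n = ∫ ω, Y n ω ∂(P n))
    (hμ' : ∀ n, μ' n = ∫ ω, Y' n ω ∂(P' n))
    (hσpos : ∀ n, 0 < σ n) (hσ'pos : ∀ n, 0 < σ' n)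
    (hσ : ∀ n, (σ n) ^ 2 = ∫ ω, (Y n ω - μ n) ^ 2 ∂(P n))
    (hσ' : ∀ n, (σ' n) ^ 2 = ∫ ω, (Y' n ω - μ' n) ^ 2 ∂(P' n))
    (ε₁ ε₂ ε₃ ε₄ : ℕ → ℝ)
    (hε₁0 : Filter.Tendsto ε₁ Filter.atTop (nhds 0))
    (hε₂0 : Filter.Tendsto ε₂ Filter.atTop (nhds 0))
    (hε₃0 : Filter.Tendsto ε₃ Filter.atTop (nhds 0))
    (hε₄0 : Filter.Tendsto ε₄ Filter.atTop (nhds 0))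
    (h1 : ∀ n, |μ' n - μ n| ≤ ε₁ n * σ' n)
    (h2 : ∀ n, |σ' n - σ n| ≤ ε₂ n * σ' n)
    (h3 : ∀ n t, |(P' n {ω | t ≤ Y' n ω}).toReal - (P n {ω | t ≤ Y n ω}).toReal| ≤ ε₃ n)
    (h4 : ∀ n t,
      |(P' n {ω | (Y' n ω - μ' n) / σ' n ≤ t}).toReal - stdNormalCDF t| ≤ ε₄ n) :
    ∃ C > 0, ∀ n t,
      |(P n {ω | (Y n ω - μ n) / σ n ≤ t}).toReal - stdNormalCDF t|
        ≤ C * (ε₁ n + ε₂ n + ε₃ n + ε₄ n) := by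
  refine ⟨2, by norm_num, fun n t => ?_⟩
  have hσ'n := hσ'pos n
  have hσn := hσpos n
  have hε₁ : 0 ≤ ε₁ n := by
    by_contra h
    push_neg at h
    have := mul_neg_of_neg_of_pos h hσ'n
    linarith [abs_nonneg (μ' n - μ n), h1 n]
  have hε₂ : 0 ≤ ε₂ n := by
    by_contra h
    push_neg at h
    have := mul_neg_of_neg_of_pos h hσ'n
    linarith [abs_nonneg (σ' n - σ n), h2 n]
  have hε₃ : 0 ≤ ε₃ n := le_trans (abs_nonneg _) (h3 n 0)
  have hε₄ : 0 ≤ ε₄ n := le_trans (abs_nonneg _) (h4 n 0)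
  by_cases hc : ε₂ n ≤ 1/2
  swap
  · push_neg at hc
    have hA := prob_le_one' (P n) {ω | (Y n ω - μ n) / σ n ≤ t}
    have hA0 : (0:ℝ) ≤ (P n {ω | (Y n ω - μ n) / σ n ≤ t}).toReal := ENNReal.toReal_nonneg
    have hB1 := cdf_nonneg t
    have hB2 := cdf_le_one t
    have habs : |(P n {ω | (Y n ω - μ n) / σ n ≤ t}).toReal - stdNormalCDF t| ≤ 1 :=
      abs_le.2 ⟨by linarith, by linarith⟩
    linarith
  · set s := μ n + t * σ n with hs
    set t'' := (s - μ' n) / σ' n with ht''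
    have hmY2 : ∀ c : ℝ, MeasurableSet {ω | c ≤ Y n ω} :=
      fun c => measurableSet_le measurable_const (hY n)
    have hmY2' : ∀ c : ℝ, MeasurableSet {ω | c ≤ Y' n ω} :=
      fun c => measurableSet_le measurable_const (hY' n)
    have hset : {ω | (Y n ω - μ n) / σ n ≤ t} = {ω | Y n ω ≤ s} := by
      ext ω
      simp only [Set.mem_setOf_eq, div_le_iff₀ hσn, sub_le_iff_le_add', hs]
    have hupper : (P n {ω | Y n ω ≤ s}).toReal ≤ stdNormalCDF t'' + (ε₃ n + ε₄ n) := by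
      apply le_of_forall_pos_le_add
      intro η hη
      set c := s + η * σ' n with hc'
      have s1 : {ω | Y n ω ≤ s} ⊆ {ω | c ≤ Y n ω}ᶜ := by
        intro ω hω
        have hω' : Y n ω ≤ s := hω
        simp only [Set.mem_compl_iff, Set.mem_setOf_eq, not_le]
        have hmp : 0 < η * σ' n := mul_pos hη hσ'n
        show Y n ω < c
        rw [hc']
        linarith
      have s2 : (P n {ω | Y n ω ≤ s}).toReal ≤ 1 - (P n {ω | c ≤ Y n ω}).toReal := by
        rw [← prob_compl' (P n) (hmY2 c)]
        exact prob_mono' _ s1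
      have s3 := (abs_le.1 (h3 n c)).2
      have s4 : {ω | c ≤ Y' n ω}ᶜ ⊆ {ω | (Y' n ω - μ' n) / σ' n ≤ (c - μ' n) / σ' n} := by
        intro ω hω
        have hω' : ¬ c ≤ Y' n ω := hω
        push_neg at hω'
        show (Y' n ω - μ' n) / σ' n ≤ (c - μ' n) / σ' n
        exact (div_le_div_iff_of_pos_right hσ'n).2 (by linarith)
      have s5 : 1 - (P' n {ω | c ≤ Y' n ω}).toReal
          ≤ (P' n {ω | (Y' n ω - μ' n) / σ' n ≤ (c - μ' n) / σ' n}).toReal := by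
        rw [← prob_compl' (P' n) (hmY2' c)]
        exact prob_mono' _ s4
      have s6 := (abs_le.1 (h4 n ((c - μ' n) / σ' n))).2
      have s7 : (c - μ' n) / σ' n = t'' + η := by
        rw [hc', ht'']
        field_simp
        ring
      rw [s7] at s6 s5
      have s8 : stdNormalCDF (t'' + η) ≤ stdNormalCDF t'' + η := by
        have h := (abs_le.1 (cdf_lip t'' (t'' + η))).2
        have h2 : |t'' + η - t''| = η := by
          rw [show t'' + η - t'' = η by ring, abs_of_pos hη]
        rw [h2] at h
        linarith
      linarith
    have hlower : stdNormalCDF t'' ≤ (P n {ω | Y n ω ≤ s}).toReal + (ε₃ n + ε₄ n) := by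
      apply le_of_forall_pos_le_add
      intro η hη
      set c := s - η * σ' n with hc'
      have s7 : (c - μ' n) / σ' n = t'' - η := by
        rw [hc', ht'']
        field_simp
        ring
      have s8 : stdNormalCDF t'' ≤ stdNormalCDF (t'' - η) + η := by
        have h := (abs_le.1 (cdf_lip (t'' - η) t'')).2
        have h2 : |t'' - (t'' - η)| = η := by
          rw [show t'' - (t'' - η) = η by ring, abs_of_pos hη]
        rw [h2] at h
        linarith
      have s6 := (abs_le.1 (h4 n ((c - μ' n) / σ' n))).1
      rw [s7] at s6
      have s4 : {ω | (Y' n ω - μ' n) / σ' n ≤ t'' - η} ⊆ {ω | s ≤ Y' n ω}ᶜ := by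
        intro ω hω
        have hω' : (Y' n ω - μ' n) / σ' n ≤ t'' - η := hω
        rw [← s7] at hω'
        have h9 : Y' n ω - μ' n ≤ c - μ' n := (div_le_div_iff_of_pos_right hσ'n).1 hω'
        simp only [Set.mem_compl_iff, Set.mem_setOf_eq, not_le]
        have hmp : 0 < η * σ' n := mul_pos hη hσ'n
        have hcs : c = s - η * σ' n := hc'
        show Y' n ω < s
        linarith
      have s5 : (P' n {ω | (Y' n ω - μ' n) / σ' n ≤ t'' - η}).toReal
          ≤ 1 - (P' n {ω | s ≤ Y' n ω}).toReal := by
        rw [← prob_compl' (P' n) (hmY2' s)]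
        exact prob_mono' _ s4
      have s3 := (abs_le.1 (h3 n s)).1
      have s2 : 1 - (P n {ω | s ≤ Y n ω}).toReal ≤ (P n {ω | Y n ω ≤ s}).toReal := by
        rw [← prob_compl' (P n) (hmY2 s)]
        apply prob_mono'
        intro ω hω
        have hω' : ¬ s ≤ Y n ω := hω
        push_neg at hω'
        show Y n ω ≤ s
        linarith
      linarith
    have hB : |(P n {ω | Y n ω ≤ s}).toReal - stdNormalCDF t''| ≤ ε₃ n + ε₄ n :=
      abs_le.2 ⟨by linarith, by linarith⟩
    set a := σ n / σ' n with ha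
    set b := (μ n - μ' n) / σ' n with hb'
    have ht2 : t'' = a * t + b := by
      rw [ht'', ha, hb', hs]
      field_simp
      ring
    have hb : |b| ≤ ε₁ n := by
      rw [hb', abs_div, abs_of_pos hσ'n, div_le_iff₀ hσ'n]
      calc |μ n - μ' n| = |μ' n - μ n| := abs_sub_comm _ _
        _ ≤ ε₁ n * σ' n := h1 n
    have haa : |a - 1| ≤ ε₂ n := by
      have h : a - 1 = (σ n - σ' n) / σ' n := by
        rw [ha]; field_simp
      rw [h, abs_div, abs_of_pos hσ'n, div_le_iff₀ hσ'n]
      calc |σ n - σ' n| = |σ' n - σ n| := abs_sub_comm _ _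
        _ ≤ ε₂ n * σ' n := h2 n
    have hC1 : |stdNormalCDF t'' - stdNormalCDF (a * t)| ≤ ε₁ n * (1/2) := by
      have hlip := cdf_lip (a * t) t''
      have he : |t'' - a * t| = |b| := by rw [ht2]; ring_nf
      rw [he] at hlip
      have := mul_le_mul_of_nonneg_right hb (by norm_num : (0:ℝ) ≤ 1/2)
      linarith
    have hC2 : |stdNormalCDF (a * t) - stdNormalCDF t| ≤ 2 * ε₂ n := by
      have h := cdf_scale (a := a) (t := t) (le_trans haa hc)
      have := abs_nonneg (a - 1)
      linarith
    rw [hset]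
    calc |(P n {ω | Y n ω ≤ s}).toReal - stdNormalCDF t|
        ≤ |(P n {ω | Y n ω ≤ s}).toReal - stdNormalCDF t''|
          + |stdNormalCDF t'' - stdNormalCDF t| := abs_sub_le _ _ _
      _ ≤ |(P n {ω | Y n ω ≤ s}).toReal - stdNormalCDF t''|
          + (|stdNormalCDF t'' - stdNormalCDF (a * t)|
            + |stdNormalCDF (a * t) - stdNormalCDF t|) := by
          linarith [abs_sub_le (stdNormalCDF t'') (stdNormalCDF (a * t)) (stdNormalCDF t)]
      _ ≤ 2 * (ε₁ n + ε₂ n + ε₃ n + ε₄ n) := by linarith
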